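/- Under the conditions of the Exp4.P theorem, with probability at least 1 − δ: for every expert i, G_i ≤ Ĝ_i + √(ln(N/δ))·σ̂_i, where Ĝ_i = Σ_t ŷ_i(t) and σ̂_i = √(KT) + (1/√(KT))·Σ_t v̂_i(t). -/

import Mathlib

lemma exp_le_one_add_add_sq {x : ℝ} (hx : x ≤ 1) : Real.exp x ≤ 1 + x + x ^ 2 := by
  rcases le_or_gt x (-1) with h | h
  · have h1 : Real.exp x ≤ Real.exp (-1) := Real.exp_le_exp.2 h
    have h2 : Real.exp (-1) = (Real.exp 1)⁻¹ := by rw [Real.exp_neg]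
    have h3 : (2.7182818283 : ℝ) < Real.exp 1 := Real.exp_one_gt_d9
    have h4 : (0:ℝ) < Real.exp 1 := Real.exp_pos 1
    have h5 : Real.exp (-1) < 1/2 := by
      rw [h2]; rw [inv_lt_iff_one_lt_mul₀ h4] at *; nlinarith
    nlinarith [sq_nonneg (x + 1)]
  · have habs : |x| ≤ 1 := abs_le.2 ⟨le_of_lt (by linarith), hx⟩
    have hb := Real.exp_bound habs (n := 3) (by norm_num)
    have hsum : ∑ m ∈ Finset.range 3, x ^ m / m.factorial = 1 + x + x ^ 2 / 2 := by
      norm_num [Finset.sum_range_succ, Nat.factorial]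
    rw [hsum] at hb
    have h1 : Real.exp x ≤ 1 + x + x ^ 2 / 2 + |x| ^ 3 * ((3:ℕ).succ / ((3:ℕ).factorial * 3)) :=
      by have := (abs_sub_le_iff.1 hb).1; linarith
    have h2 : |x| ^ 3 ≤ x ^ 2 := by
      have : |x| ^ 3 = |x| * x ^ 2 := by rw [← sq_abs]; ring
      rw [this]; nlinarith [abs_nonneg x, sq_nonneg x]
    have h3 : ((3:ℕ).succ / ((3:ℕ).factorial * 3) : ℝ) = 2/9 := by norm_num [Nat.factorial]
    rw [h3] at h1
    nlinarith

lemma mgf_step {K : ℕ} (q xi rw : Fin K → ℝ)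
    (hq : ∀ j, 0 < q j) (hqs : ∑ j, q j = 1)
    (hxi : ∀ j, 0 ≤ xi j) (hxis : ∑ j, xi j = 1)
    (hrw : ∀ j, rw j ∈ Set.Icc (0:ℝ) 1)
    (b : ℝ) (hb0 : 0 < b) (hb1 : b ≤ 1) :
    ∑ k, q k * Real.exp (b * ((∑ j, xi j * rw j) - xi k * rw k / q k)
        - b ^ 2 * (∑ j, xi j / q j)) ≤ 1 := by
  set x : ℝ := ∑ j, xi j * rw j with hxdef
  set v : ℝ := ∑ j, xi j / q j with hvdef
  set z : Fin K → ℝ := fun k => b * (x - xi k * rw k / q k) with hzdef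
  have hxile : ∀ j, xi j ≤ 1 := fun j => by
    rw [← hxis]
    exact Finset.single_le_sum (fun i _ => hxi i) (Finset.mem_univ j)
  have hx0 : 0 ≤ x := Finset.sum_nonneg fun j _ => mul_nonneg (hxi j) (hrw j).1
  have hx1 : x ≤ 1 := by
    rw [← hxis]
    exact Finset.sum_le_sum fun j _ => mul_le_of_le_one_right (hxi j) (hrw j).2
  have hz1 : ∀ k, z k ≤ 1 := by
    intro k
    have h1 : 0 ≤ xi k * rw k / q k :=
      div_nonneg (mul_nonneg (hxi k) (hrw k).1) (hq k).le
    have h2 : z k ≤ b * x := mul_le_mul_of_nonneg_left (by linarith) hb0.le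
    calc z k ≤ b * x := h2
      _ ≤ 1 * 1 := mul_le_mul hb1 hx1 hx0 (by linarith)
      _ = 1 := by ring
  have hqz : ∑ k, q k * z k = 0 := by
    have hterm : ∀ k, q k * z k = b * (q k * x) - b * (xi k * rw k) := by
      intro k
      have hqk := (hq k).ne'
      simp only [hzdef]
      field_simp
    calc ∑ k, q k * z k = ∑ k, (b * (q k * x) - b * (xi k * rw k)) :=
          Finset.sum_congr rfl fun k _ => hterm k
      _ = b * ((∑ k, q k) * x) - b * x := by
          rw [Finset.sum_sub_distrib, ← Finset.mul_sum, ← Finset.sum_mul, ← Finset.mul_sum, hxdef]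
      _ = 0 := by rw [hqs]; ring
  have hqz2 : ∑ k, q k * z k ^ 2 ≤ b ^ 2 * v := by
    have hterm : ∀ k, q k * z k ^ 2 =
        b ^ 2 * (q k * x ^ 2 - 2 * x * (xi k * rw k) + (xi k * rw k) ^ 2 / q k) := by
      intro k
      have hqk := (hq k).ne'
      simp only [hzdef]
      field_simp
      ring
    have hsum : ∑ k, q k * z k ^ 2 =
        b ^ 2 * (x ^ 2 - 2 * x * x + ∑ k, (xi k * rw k) ^ 2 / q k) := by
      rw [Finset.sum_congr rfl fun k _ => hterm k, ← Finset.mul_sum]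
      congr 1
      rw [Finset.sum_add_distrib, Finset.sum_sub_distrib, ← Finset.sum_mul, hqs,
        ← Finset.mul_sum, ← hxdef]
      ring
    rw [hsum]
    have hle : ∑ k, (xi k * rw k) ^ 2 / q k ≤ v := by
      refine Finset.sum_le_sum fun k _ => ?_
      have hnum : (xi k * rw k) ^ 2 ≤ xi k := by
        have ha : xi k ^ 2 ≤ xi k := by nlinarith [hxi k, hxile k]
        have hb' : rw k ^ 2 ≤ 1 := by nlinarith [(hrw k).1, (hrw k).2]
        have hc : xi k ^ 2 * rw k ^ 2 ≤ xi k ^ 2 * 1 :=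
          mul_le_mul_of_nonneg_left hb' (sq_nonneg (xi k))
        nlinarith
      exact (div_le_div_iff_of_pos_right (hq k)).2 hnum
    nlinarith [sq_nonneg x, sq_nonneg b]
  have hkey : ∑ k, q k * Real.exp (z k) ≤ Real.exp (b ^ 2 * v) := by
    have h1 : ∑ k, q k * Real.exp (z k) ≤ ∑ k, q k * (1 + z k + z k ^ 2) :=
      Finset.sum_le_sum fun k _ =>
        mul_le_mul_of_nonneg_left (exp_le_one_add_add_sq (hz1 k)) (hq k).le
    have h2 : ∑ k, q k * (1 + z k + z k ^ 2) = 1 + ∑ k, q k * z k ^ 2 := by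
      have : ∀ k, q k * (1 + z k + z k ^ 2) = q k + q k * z k + q k * z k ^ 2 :=
        fun k => by ring
      rw [Finset.sum_congr rfl fun k _ => this k, Finset.sum_add_distrib,
        Finset.sum_add_distrib, hqs, hqz]
      ring
    have h3 : 1 + ∑ k, q k * z k ^ 2 ≤ 1 + b ^ 2 * v := by linarith
    have h4 : 1 + b ^ 2 * v ≤ Real.exp (b ^ 2 * v) := by
      have := Real.add_one_le_exp (b ^ 2 * v)
      linarith
    linarith
  have hfinal : ∀ k, q k * Real.exp (z k - b ^ 2 * v) =
      q k * Real.exp (z k) * Real.exp (-(b ^ 2 * v)) := by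
    intro k
    rw [Real.exp_sub, Real.exp_neg]
    ring
  calc ∑ k, q k * Real.exp (z k - b ^ 2 * v)
      = (∑ k, q k * Real.exp (z k)) * Real.exp (-(b ^ 2 * v)) := by
        rw [Finset.sum_congr rfl fun k _ => hfinal k, ← Finset.sum_mul]
    _ ≤ Real.exp (b ^ 2 * v) * Real.exp (-(b ^ 2 * v)) :=
        mul_le_mul_of_nonneg_right hkey (Real.exp_pos _).le
    _ = 1 := by rw [← Real.exp_add]; simp


lemma seq_sum_le {K T : ℕ} (φ : Fin T → (Fin T → Fin K) → ℝ)
    (hpos : ∀ t js, 0 ≤ φ t js)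
    (hpast : ∀ (t : Fin T) (js js' : Fin T → Fin K),
      (∀ s : Fin T, s.val < t.val → js s = js' s) → js t = js' t → φ t js = φ t js')
    (hstep : ∀ (t : Fin T) (js : Fin T → Fin K),
      ∑ k, φ t (Function.update js t k) ≤ 1) :
    ∀ (d m : ℕ), m + d = T → ∀ js0 : Fin T → Fin K,
      ∑ js ∈ Finset.univ.filter
          (fun js : Fin T → Fin K => ∀ s : Fin T, s.val < m → js s = js0 s),
        ∏ t ∈ Finset.univ.filter (fun t : Fin T => m ≤ t.val), φ t js ≤ 1 := by
  intro d
  induction d with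
  | zero =>
    intro m hm js0
    have hset : Finset.univ.filter
        (fun js : Fin T → Fin K => ∀ s : Fin T, s.val < m → js s = js0 s) = {js0} := by
      ext js
      simp only [Finset.mem_filter, Finset.mem_univ, true_and, Finset.mem_singleton]
      constructor
      · intro h; funext s; exact h s (by have := s.isLt; omega)
      · intro h s _; rw [h]
    have hempty : Finset.univ.filter (fun t : Fin T => m ≤ t.val) = ∅ := by
      apply Finset.filter_false_of_mem
      intro t _
      have := t.isLt
      omega
    rw [hset, hempty]
    simp
  | succ d ih =>
    intro m hm js0
    have hmT : m < T := by omega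
    set tm : Fin T := ⟨m, hmT⟩ with htm
    set F' : Finset (Fin T) := Finset.univ.filter (fun t : Fin T => m + 1 ≤ t.val) with hF'
    have hF : Finset.univ.filter (fun t : Fin T => m ≤ t.val) = insert tm F' := by
      ext t
      simp only [hF', Finset.mem_filter, Finset.mem_univ, true_and, Finset.mem_insert,
        Fin.ext_iff, htm]
      omega
    have htm_not : tm ∉ F' := by simp [hF', htm]
    set A : Finset (Fin T → Fin K) := Finset.univ.filter
        (fun js : Fin T → Fin K => ∀ s : Fin T, s.val < m → js s = js0 s) with hA
    have hfiber : ∑ js ∈ A, ∏ t ∈ Finset.univ.filter (fun t : Fin T => m ≤ t.val), φ t js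
        = ∑ k : Fin K, ∑ js ∈ A.filter (fun js => js tm = k),
            ∏ t ∈ Finset.univ.filter (fun t : Fin T => m ≤ t.val), φ t js := by
      exact (Finset.sum_fiberwise A (fun js => js tm) _).symm
    rw [hfiber]
    have hbound : ∀ k : Fin K, ∑ js ∈ A.filter (fun js => js tm = k),
        ∏ t ∈ Finset.univ.filter (fun t : Fin T => m ≤ t.val), φ t js
        ≤ φ tm (Function.update js0 tm k) := by
      intro k
      set js0' : Fin T → Fin K := Function.update js0 tm k with hjs0'
      have hAk : A.filter (fun js => js tm = k) = Finset.univ.filter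
          (fun js : Fin T → Fin K => ∀ s : Fin T, s.val < m + 1 → js s = js0' s) := by
        ext js
        simp only [hA, Finset.mem_filter, Finset.mem_univ, true_and]
        constructor
        · rintro ⟨hagree, heq⟩ s hs
          rcases lt_or_ge s.val m with h | h
          · rw [hagree s h, hjs0', Function.update_of_ne]
            intro hc
            rw [hc] at h
            simp [htm] at h
          · have hsm : s = tm := by
              apply Fin.ext
              simp only [htm]
              omega
            rw [hsm, heq, hjs0', Function.update_self]
        · intro h
          constructor
          · intro s hs
            have := h s (by omega)
            rw [this, hjs0', Function.update_of_ne]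
            intro hc
            rw [hc] at hs
            simp [htm] at hs
          · have := h tm (by simp [htm])
            rw [this, hjs0', Function.update_self]
      have hsplit : ∀ js ∈ A.filter (fun js => js tm = k),
          ∏ t ∈ Finset.univ.filter (fun t : Fin T => m ≤ t.val), φ t js
          = φ tm js0' * ∏ t ∈ F', φ t js := by
        intro js hjs
        rw [hF, Finset.prod_insert htm_not]
        congr 1
        rw [hAk] at hjs
        simp only [Finset.mem_filter, Finset.mem_univ, true_and] at hjs
        apply hpast
        · intro s hs
          exact hjs s (by simp only [htm] at hs ⊢; omega)
        · exact hjs tm (by simp [htm])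
      rw [Finset.sum_congr rfl hsplit, ← Finset.mul_sum, hAk]
      calc φ tm js0' * ∑ js ∈ Finset.univ.filter
            (fun js : Fin T → Fin K => ∀ s : Fin T, s.val < m + 1 → js s = js0' s),
            ∏ t ∈ F', φ t js
          ≤ φ tm js0' * 1 := by
            apply mul_le_mul_of_nonneg_left _ (hpos tm js0')
            exact ih (m + 1) (by omega) js0'
        _ = φ tm js0' := mul_one _
    calc ∑ k : Fin K, ∑ js ∈ A.filter (fun js => js tm = k),
          ∏ t ∈ Finset.univ.filter (fun t : Fin T => m ≤ t.val), φ t js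
        ≤ ∑ k : Fin K, φ tm (Function.update js0 tm k) :=
          Finset.sum_le_sum fun k _ => hbound k
      _ ≤ 1 := hstep tm js0

lemma seq_sum_eq {K T : ℕ} (φ : Fin T → (Fin T → Fin K) → ℝ)
    (hpast : ∀ (t : Fin T) (js js' : Fin T → Fin K),
      (∀ s : Fin T, s.val < t.val → js s = js' s) → js t = js' t → φ t js = φ t js')
    (hstep : ∀ (t : Fin T) (js : Fin T → Fin K),
      ∑ k, φ t (Function.update js t k) = 1) :
    ∀ (d m : ℕ), m + d = T → ∀ js0 : Fin T → Fin K,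
      ∑ js ∈ Finset.univ.filter
          (fun js : Fin T → Fin K => ∀ s : Fin T, s.val < m → js s = js0 s),
        ∏ t ∈ Finset.univ.filter (fun t : Fin T => m ≤ t.val), φ t js = 1 := by
  intro d
  induction d with
  | zero =>
    intro m hm js0
    have hset : Finset.univ.filter
        (fun js : Fin T → Fin K => ∀ s : Fin T, s.val < m → js s = js0 s) = {js0} := by
      ext js
      simp only [Finset.mem_filter, Finset.mem_univ, true_and, Finset.mem_singleton]
      constructor
      · intro h; funext s; exact h s (by have := s.isLt; omega)
      · intro h s _; rw [h]
    have hempty : Finset.univ.filter (fun t : Fin T => m ≤ t.val) = ∅ := by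
      apply Finset.filter_false_of_mem
      intro t _
      have := t.isLt
      omega
    rw [hset, hempty]
    simp
  | succ d ih =>
    intro m hm js0
    have hmT : m < T := by omega
    set tm : Fin T := ⟨m, hmT⟩ with htm
    set F' : Finset (Fin T) := Finset.univ.filter (fun t : Fin T => m + 1 ≤ t.val) with hF'
    have hF : Finset.univ.filter (fun t : Fin T => m ≤ t.val) = insert tm F' := by
      ext t
      simp only [hF', Finset.mem_filter, Finset.mem_univ, true_and, Finset.mem_insert,
        Fin.ext_iff, htm]
      omega
    have htm_not : tm ∉ F' := by simp [hF', htm]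
    set A : Finset (Fin T → Fin K) := Finset.univ.filter
        (fun js : Fin T → Fin K => ∀ s : Fin T, s.val < m → js s = js0 s) with hA
    have hfiber : ∑ js ∈ A, ∏ t ∈ Finset.univ.filter (fun t : Fin T => m ≤ t.val), φ t js
        = ∑ k : Fin K, ∑ js ∈ A.filter (fun js => js tm = k),
            ∏ t ∈ Finset.univ.filter (fun t : Fin T => m ≤ t.val), φ t js := by
      exact (Finset.sum_fiberwise A (fun js => js tm) _).symm
    rw [hfiber]
    have hbound : ∀ k : Fin K, ∑ js ∈ A.filter (fun js => js tm = k),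
        ∏ t ∈ Finset.univ.filter (fun t : Fin T => m ≤ t.val), φ t js
        = φ tm (Function.update js0 tm k) := by
      intro k
      set js0' : Fin T → Fin K := Function.update js0 tm k with hjs0'
      have hAk : A.filter (fun js => js tm = k) = Finset.univ.filter
          (fun js : Fin T → Fin K => ∀ s : Fin T, s.val < m + 1 → js s = js0' s) := by
        ext js
        simp only [hA, Finset.mem_filter, Finset.mem_univ, true_and]
        constructor
        · rintro ⟨hagree, heq⟩ s hs
          rcases lt_or_ge s.val m with h | h
          · rw [hagree s h, hjs0', Function.update_of_ne]
            intro hc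
            rw [hc] at h
            simp [htm] at h
          · have hsm : s = tm := by
              apply Fin.ext
              simp only [htm]
              omega
            rw [hsm, heq, hjs0', Function.update_self]
        · intro h
          constructor
          · intro s hs
            have := h s (by omega)
            rw [this, hjs0', Function.update_of_ne]
            intro hc
            rw [hc] at hs
            simp [htm] at hs
          · have := h tm (by simp [htm])
            rw [this, hjs0', Function.update_self]
      have hsplit : ∀ js ∈ A.filter (fun js => js tm = k),
          ∏ t ∈ Finset.univ.filter (fun t : Fin T => m ≤ t.val), φ t js
          = φ tm js0' * ∏ t ∈ F', φ t js := by
        intro js hjs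
        rw [hF, Finset.prod_insert htm_not]
        congr 1
        rw [hAk] at hjs
        simp only [Finset.mem_filter, Finset.mem_univ, true_and] at hjs
        apply hpast
        · intro s hs
          exact hjs s (by simp only [htm] at hs ⊢; omega)
        · exact hjs tm (by simp [htm])
      rw [Finset.sum_congr rfl hsplit, ← Finset.mul_sum, hAk]
      rw [ih (m + 1) (by omega) js0', mul_one]
    calc ∑ k : Fin K, ∑ js ∈ A.filter (fun js => js tm = k),
          ∏ t ∈ Finset.univ.filter (fun t : Fin T => m ≤ t.val), φ t js
        = ∑ k : Fin K, φ tm (Function.update js0 tm k) :=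
          Finset.sum_congr rfl fun k _ => hbound k
      _ = 1 := hstep tm js0

open Classical in
theorem stmt_13 (K T N : ℕ) (hK : 0 < K) (hT : 0 < T) (hN : 0 < N)
    (δ : ℝ) (hδ0 : 0 < δ) (hδ1 : δ < 1)
    (hcond : Real.log (N / δ) ≤ K * T)
    (r : Fin T → Fin K → ℝ) (hr : ∀ t j, r t j ∈ Set.Icc (0 : ℝ) 1)
    (ξ : Fin T → Fin N → Fin K → ℝ)
    (hξ0 : ∀ t i j, 0 ≤ ξ t i j) (hξ1 : ∀ t i, ∑ j, ξ t i j = 1)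
    (p : Fin T → (Fin T → Fin K) → Fin K → ℝ)
    (hppos : ∀ t js j, 0 < p t js j)
    (hpsum : ∀ t js, ∑ j, p t js j = 1)
    (hppast : ∀ (t : Fin T) (js js' : Fin T → Fin K),
      (∀ s : Fin T, s < t → js s = js' s) → p t js = p t js') :
    1 - δ ≤
      (∑ js ∈ Finset.univ.filter (fun js : Fin T → Fin K =>
          ∀ i : Fin N,
            (∑ t, ∑ j, ξ t i j * r t j) ≤
              (∑ t, ξ t i (js t) * r t (js t) / p t js (js t)) +
                Real.sqrt (Real.log (N / δ)) *
                  (Real.sqrt (K * T) +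
                    (1 / Real.sqrt (K * T)) * ∑ t, ∑ j, ξ t i j / p t js j)),
        ∏ t : Fin T, p t js (js t)) := by
  classical
  have hj0 : Fin K := ⟨0, hK⟩
  set L : ℝ := Real.log (N / δ) with hLdef
  have hN1 : (1:ℝ) ≤ (N:ℝ) := by exact_mod_cast hN
  have hNδ : (1:ℝ) < (N:ℝ) / δ := by
    rw [lt_div_iff₀ hδ0]; nlinarith
  have hL0 : 0 < L := Real.log_pos hNδ
  have hKT0 : (0:ℝ) < (K:ℝ) * (T:ℝ) := by
    have h1 : (0:ℝ) < (K:ℝ) := by exact_mod_cast hK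
    have h2 : (0:ℝ) < (T:ℝ) := by exact_mod_cast hT
    positivity
  have hsKT : 0 < Real.sqrt ((K:ℝ) * (T:ℝ)) := Real.sqrt_pos.2 hKT0
  have hsL : 0 < Real.sqrt L := Real.sqrt_pos.2 hL0
  set b : ℝ := Real.sqrt L / Real.sqrt ((K:ℝ) * (T:ℝ)) with hbdef
  have hb0 : 0 < b := div_pos hsL hsKT
  have hb1 : b ≤ 1 := by
    rw [hbdef, div_le_one hsKT]
    apply Real.sqrt_le_sqrt
    exact_mod_cast hcond
  have hb2 : b ^ 2 = L / ((K:ℝ) * (T:ℝ)) := by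
    rw [hbdef, div_pow, Real.sq_sqrt hL0.le, Real.sq_sqrt hKT0.le]
  set W : (Fin T → Fin K) → ℝ := fun js => ∏ t, p t js (js t) with hWdef
  have hW0 : ∀ js, 0 ≤ W js := fun js =>
    Finset.prod_nonneg fun t _ => (hppos t js (js t)).le
  -- p t doesn't depend on coordinate t and later
  have hpupd : ∀ (t : Fin T) (js : Fin T → Fin K) (k : Fin K),
      p t (Function.update js t k) = p t js := by
    intro t js k
    apply hppast
    intro s hs
    apply Function.update_of_ne
    exact Fin.ne_of_lt hs
  -- total mass
  have hWtot : ∑ js : Fin T → Fin K, W js = 1 := by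
    have h := seq_sum_eq (φ := fun t js => p t js (js t))
      (fun t js js' h he => by
        show p t js (js t) = p t js' (js' t)
        rw [hppast t js js' (fun s hs => h s hs), he])
      (fun t js => by
        show ∑ k, p t (Function.update js t k) ((Function.update js t k) t) = 1
        rw [Finset.sum_congr rfl (fun k _ => by
          rw [Function.update_self, hpupd t js k])]
        exact hpsum t js)
      T 0 (Nat.zero_add T) (fun _ => ⟨0, hK⟩)
    simpa using h
  -- Z processes
  set Z : Fin N → Fin T → (Fin T → Fin K) → ℝ := fun i t js =>
    b * ((∑ j, ξ t i j * r t j) - ξ t i (js t) * r t (js t) / p t js (js t))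
      - b ^ 2 * (∑ j, ξ t i j / p t js j) with hZdef
  have hmgf : ∀ i, ∑ js : Fin T → Fin K, W js * Real.exp (∑ t, Z i t js) ≤ 1 := by
    intro i
    have h := seq_sum_le (φ := fun t js => p t js (js t) * Real.exp (Z i t js))
      (fun t js => mul_nonneg (hppos t js (js t)).le (Real.exp_pos _).le)
      (fun t js js' h he => by
        show p t js (js t) * Real.exp (Z i t js) = p t js' (js' t) * Real.exp (Z i t js')
        simp only [hZdef]
        rw [hppast t js js' (fun s hs => h s hs), he])
      (fun t js => by
        show ∑ k, p t (Function.update js t k) ((Function.update js t k) t) *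
            Real.exp (Z i t (Function.update js t k)) ≤ 1
        have hterm : ∀ k : Fin K,
            p t (Function.update js t k) ((Function.update js t k) t) *
              Real.exp (Z i t (Function.update js t k))
            = p t js k * Real.exp (b * ((∑ j, ξ t i j * r t j)
                - ξ t i k * r t k / p t js k)
                - b ^ 2 * (∑ j, ξ t i j / p t js j)) := by
          intro k
          simp only [hZdef, hpupd t js k, Function.update_self]
        rw [Finset.sum_congr rfl (fun k _ => hterm k)]
        exact mgf_step (p t js) (ξ t i) (r t) (hppos t js) (hpsum t js)
          (hξ0 t i) (hξ1 t i) (hr t) b hb0 hb1)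
      T 0 (Nat.zero_add T) (fun _ => ⟨0, hK⟩)
    have hprod : ∀ js : Fin T → Fin K,
        ∏ t, (p t js (js t) * Real.exp (Z i t js)) = W js * Real.exp (∑ t, Z i t js) := by
      intro js
      rw [Finset.prod_mul_distrib, Real.exp_sum]
    calc ∑ js : Fin T → Fin K, W js * Real.exp (∑ t, Z i t js)
        = ∑ js : Fin T → Fin K, ∏ t, (p t js (js t) * Real.exp (Z i t js)) :=
          Finset.sum_congr rfl fun js _ => (hprod js).symm
      _ ≤ 1 := by simpa using h
  -- Markov for each expert
  have hmarkov : ∀ i, ∑ js ∈ Finset.univ.filter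
      (fun js : Fin T → Fin K => L < ∑ t, Z i t js), W js ≤ δ / N := by
    intro i
    have h1 : ∑ js ∈ Finset.univ.filter
        (fun js : Fin T → Fin K => L < ∑ t, Z i t js), W js
        ≤ ∑ js ∈ Finset.univ.filter
        (fun js : Fin T → Fin K => L < ∑ t, Z i t js),
          W js * (Real.exp (∑ t, Z i t js) * Real.exp (-L)) := by
      refine Finset.sum_le_sum fun js hjs => ?_
      simp only [Finset.mem_filter] at hjs
      have h2 : (1:ℝ) ≤ Real.exp (∑ t, Z i t js) * Real.exp (-L) := by
        rw [← Real.exp_add]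
        apply Real.one_le_exp
        linarith [hjs.2]
      nlinarith [hW0 js]
    have h3 : ∑ js ∈ Finset.univ.filter
        (fun js : Fin T → Fin K => L < ∑ t, Z i t js),
          W js * (Real.exp (∑ t, Z i t js) * Real.exp (-L))
        ≤ ∑ js : Fin T → Fin K, W js * (Real.exp (∑ t, Z i t js) * Real.exp (-L)) := by
      apply Finset.sum_le_sum_of_subset_of_nonneg (Finset.filter_subset _ _)
      intro js _ _
      have := hW0 js
      positivity
    have h4 : ∑ js : Fin T → Fin K, W js * (Real.exp (∑ t, Z i t js) * Real.exp (-L))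
        = (∑ js : Fin T → Fin K, W js * Real.exp (∑ t, Z i t js)) * Real.exp (-L) := by
      rw [Finset.sum_mul]
      exact Finset.sum_congr rfl fun js _ => by ring
    have h5 : Real.exp (-L) = δ / N := by
      rw [Real.exp_neg, hLdef, Real.exp_log (by linarith), inv_div]
    have h6 := hmgf i
    have h7 : (∑ js : Fin T → Fin K, W js * Real.exp (∑ t, Z i t js)) * Real.exp (-L)
        ≤ 1 * Real.exp (-L) :=
      mul_le_mul_of_nonneg_right h6 (Real.exp_pos _).le
    have h8 : ∑ js ∈ Finset.univ.filter
        (fun js : Fin T → Fin K => L < ∑ t, Z i t js), W js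
        ≤ (∑ js : Fin T → Fin K, W js * Real.exp (∑ t, Z i t js)) * Real.exp (-L) := by
      rw [← h4]; exact h1.trans h3
    have h9 : (1:ℝ) * Real.exp (-L) = δ / N := by rw [one_mul, h5]
    linarith
  -- good implication
  have himp : ∀ (i : Fin N) (js : Fin T → Fin K), (∑ t, Z i t js) ≤ L →
      (∑ t, ∑ j, ξ t i j * r t j) ≤
        (∑ t, ξ t i (js t) * r t (js t) / p t js (js t)) +
          Real.sqrt L *
            (Real.sqrt ((K:ℝ) * (T:ℝ)) +
              (1 / Real.sqrt ((K:ℝ) * (T:ℝ))) * ∑ t, ∑ j, ξ t i j / p t js j) := by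
    intro i js hle
    set G : ℝ := ∑ t, ∑ j, ξ t i j * r t j with hG
    set Gh : ℝ := ∑ t, ξ t i (js t) * r t (js t) / p t js (js t) with hGh
    set V : ℝ := ∑ t, ∑ j, ξ t i j / p t js j with hV
    have hsum : ∑ t, Z i t js = b * (G - Gh) - b ^ 2 * V := by
      simp only [hZdef, hG, hGh, hV, Finset.sum_sub_distrib, ← Finset.mul_sum,
        Finset.sum_sub_distrib]
    rw [hsum] at hle
    have hdiv : G - Gh ≤ L / b + b * V := by
      rw [← mul_le_mul_iff_right₀ hb0]
      have heq : b * (L / b + b * V) = L + b ^ 2 * V := by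
        field_simp
      rw [heq]
      linarith
    have hLb : L / b = Real.sqrt L * Real.sqrt ((K:ℝ) * (T:ℝ)) := by
      rw [hbdef]
      field_simp
      linear_combination (-1 : ℝ) *
        Real.sq_sqrt hL0.le
    have hbV : b * V = Real.sqrt L * ((1 / Real.sqrt ((K:ℝ) * (T:ℝ))) * V) := by
      rw [hbdef]; ring
    have : G ≤ Gh + (L / b + b * V) := by linarith
    rw [hLb, hbV] at this
    linarith [this]
  -- union bound and conclusion
  set good : (Fin T → Fin K) → Prop := fun js =>
    ∀ i : Fin N,
      (∑ t, ∑ j, ξ t i j * r t j) ≤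
        (∑ t, ξ t i (js t) * r t (js t) / p t js (js t)) +
          Real.sqrt L *
            (Real.sqrt ((K:ℝ) * (T:ℝ)) +
              (1 / Real.sqrt ((K:ℝ) * (T:ℝ))) * ∑ t, ∑ j, ξ t i j / p t js j) with hgood
  have hsplit : ∑ js ∈ Finset.univ.filter good, W js
      + ∑ js ∈ Finset.univ.filter (fun js => ¬ good js), W js = 1 := by
    rw [Finset.sum_filter_add_sum_filter_not, hWtot]
  have hbadsum : ∑ js ∈ Finset.univ.filter (fun js => ¬ good js), W js ≤ δ := by
    have hptw : ∀ js ∈ Finset.univ.filter (fun js => ¬ good js),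
        W js ≤ ∑ i : Fin N, (if L < ∑ t, Z i t js then W js else 0) := by
      intro js hjs
      simp only [Finset.mem_filter, hgood, not_forall] at hjs
      obtain ⟨i, hi⟩ := hjs.2
      have hbad : L < ∑ t, Z i t js := by
        by_contra hc
        push_neg at hc
        exact hi (himp i js hc)
      have : (if L < ∑ t, Z i t js then W js else 0) = W js := if_pos hbad
      calc W js = (if L < ∑ t, Z i t js then W js else 0) := this.symm
        _ ≤ ∑ i' : Fin N, (if L < ∑ t, Z i' t js then W js else 0) :=
          Finset.single_le_sum (f := fun i' => if L < ∑ t, Z i' t js then W js else 0)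
            (fun i' _ => by
              show (0:ℝ) ≤ if L < ∑ t, Z i' t js then W js else 0
              split
              · exact hW0 js
              · exact le_rfl) (Finset.mem_univ i)
    have h1 : ∑ js ∈ Finset.univ.filter (fun js => ¬ good js), W js
        ≤ ∑ js ∈ Finset.univ.filter (fun js => ¬ good js),
            ∑ i : Fin N, (if L < ∑ t, Z i t js then W js else 0) :=
      Finset.sum_le_sum hptw
    have h2 : ∑ js ∈ Finset.univ.filter (fun js => ¬ good js),
          ∑ i : Fin N, (if L < ∑ t, Z i t js then W js else 0)
        ≤ ∑ js : Fin T → Fin K, ∑ i : Fin N, (if L < ∑ t, Z i t js then W js else 0) := by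
      apply Finset.sum_le_sum_of_subset_of_nonneg (Finset.filter_subset _ _)
      intro js _ _
      apply Finset.sum_nonneg
      intro i _
      split
      · exact hW0 js
      · exact le_rfl
    have h3 : ∑ js : Fin T → Fin K, ∑ i : Fin N, (if L < ∑ t, Z i t js then W js else 0)
        = ∑ i : Fin N, ∑ js ∈ Finset.univ.filter
            (fun js : Fin T → Fin K => L < ∑ t, Z i t js), W js := by
      rw [Finset.sum_comm]
      exact Finset.sum_congr rfl fun i _ => (Finset.sum_filter _ _).symm
    have h4 : ∑ i : Fin N, ∑ js ∈ Finset.univ.filter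
          (fun js : Fin T → Fin K => L < ∑ t, Z i t js), W js
        ≤ ∑ i : Fin N, δ / N := Finset.sum_le_sum fun i _ => hmarkov i
    have h5 : ∑ i : Fin N, δ / (N:ℝ) = δ := by
      rw [Finset.sum_const, Finset.card_univ, Fintype.card_fin, nsmul_eq_mul]
      field_simp
    linarith [h1, h2.trans (h3.le.trans (h4.trans h5.le))]
  have hgoal : ∑ js ∈ Finset.univ.filter good, W js ≥ 1 - δ := by linarith
  -- match goal's filter with ours
  convert hgoal using 2
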